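/- Let A be a C*-algebra, I a closed ideal, and H a self-adjoint multiplier of A. Suppose there exists a positive self-adjoint element V ∈ I such that H² + V ≥ c·1 for some constant c > 0. Then H is invertible modulo I: for every f ∈ C_c((-√c, √c)) one has f(H) ∈ I. -/

import Mathlib

set_option synthInstance.maxHeartbeats 1000000

set_option maxHeartbeats 1000000

section AuxLemmas

variable {E : Type*} [NormedAddCommGroup E] [InnerProductSpace ℂ E] [CompleteSpace E]

lemma aux_cfcn_mem (x : E →L[ℂ] E) (hx : IsSelfAdjoint x) (S : Set (E →L[ℂ] E))
    (hS : IsClosed S) (h0S : (0 : E →L[ℂ] E) ∈ S) (hxS : x ∈ S)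
    (hadd : ∀ a ∈ S, ∀ b ∈ S, a + b ∈ S)
    (hmul : ∀ a ∈ S, ∀ b ∈ S, a * b ∈ S)
    (hsmul : ∀ (r : ℝ), ∀ a ∈ S, r • a ∈ S)
    (g : ℝ → ℝ) (hg : Continuous g) (hg0 : g 0 = 0) :
    cfcₙ g x ∈ S := by
  rw [cfcₙ_apply g x (hg.continuousOn) hg0 hx]
  suffices ∀ f : ContinuousMapZero (quasispectrum ℝ x) ℝ, cfcₙHom hx f ∈ S from this _
  intro f
  induction f using ContinuousMapZero.induction_on_of_compact (s := quasispectrum ℝ x) with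
  | zero => simpa using h0S
  | id => exact Set.mem_of_eq_of_mem (cfcₙHom_id (R := ℝ) hx) hxS
  | star_id => rw [star_trivial]; exact Set.mem_of_eq_of_mem (cfcₙHom_id (R := ℝ) hx) hxS
  | add f g hf hg => rw [map_add]; exact hadd _ hf _ hg
  | mul f g hf hg => rw [map_mul]; exact hmul _ hf _ hg
  | smul r f hf => rw [map_smul]; exact hsmul _ _ hf
  | frequently f hf =>
      have := mem_closure_of_frequently_of_tendsto hf
        ((cfcₙHom_isClosedEmbedding hx).continuous.tendsto f)
      rwa [hS.closure_eq] at this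

lemma aux_abs (A : NonUnitalStarSubalgebra ℂ (E →L[ℂ] E))
    (J : NonUnitalStarSubalgebra ℂ (E →L[ℂ] E))
    (hJclosed : IsClosed (J : Set (E →L[ℂ] E)))
    (hJideal : ∀ a ∈ A, ∀ x ∈ J, a * x ∈ J ∧ x * a ∈ J)
    (y : E →L[ℂ] E) (hyA : y ∈ A) (hyy : star y * y ∈ J) : y ∈ J := by
  set t := star y * y with ht_def
  have ht : IsSelfAdjoint t := IsSelfAdjoint.star_mul_self y
  have htpos : (0 : E →L[ℂ] E) ≤ t := star_mul_self_nonneg y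
  have hspec : ∀ s ∈ spectrum ℝ t, 0 ≤ s := fun s hs => spectrum_nonneg_of_nonneg htpos hs
  suffices h : y ∈ closure (J : Set (E →L[ℂ] E)) by rwa [hJclosed.closure_eq] at h
  apply Metric.mem_closure_iff.mpr
  intro ε hε
  set δ : ℝ := ε ^ 2 / 2 with hδ_def
  have hδ : 0 < δ := by positivity
  set g : ℝ → ℝ := fun s => min 1 (s / δ) with hg_def
  have hg : Continuous g := continuous_const.min (continuous_id.div_const δ)
  have hg0 : g 0 = 0 := by simp [hg_def]
  have hsmulJ : ∀ (r : ℝ), ∀ a ∈ J, r • a ∈ (J : Set (E →L[ℂ] E)) := by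
    intro r a ha
    rw [← algebraMap_smul ℂ r a]
    exact J.smul_mem _ ha
  have hut : cfcₙ g t ∈ J :=
    aux_cfcn_mem t ht J hJclosed (zero_mem J) hyy
      (fun a ha b hb => add_mem ha hb) (fun a ha b hb => mul_mem ha hb) hsmulJ g hg hg0
  set u : E →L[ℂ] E := cfcₙ g t with hu_def
  have hu_cfc : u = cfc g t := cfcₙ_eq_cfc
  refine ⟨y * u, (hJideal y hyA u hut).1, ?_⟩
  -- norm estimate
  have hone : (1 : E →L[ℂ] E) - u = cfc (fun s => 1 - g s) t := by
    rw [cfc_sub (fun _ => (1:ℝ)) g t, cfc_const (1:ℝ) t, map_one, hu_cfc]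
  have hu_sa : IsSelfAdjoint u := hu_cfc ▸ cfc_predicate g t
  have key : (1 - u) * t * (1 - u) = cfc (fun s => (1 - g s) * (s * (1 - g s))) t := by
    rw [cfc_mul .., cfc_mul .., ← hone, cfc_id' ℝ t, mul_assoc]
  have hbound : ‖(1 - u) * t * (1 - u)‖ ≤ δ := by
    rw [key]
    refine norm_cfc_le hδ.le fun s hs => ?_
    have hs0 : 0 ≤ s := hspec s hs
    rcases le_or_gt s δ with h | h
    · have hgs : g s = s / δ := min_eq_right (by rw [div_le_one hδ]; exact h)
      have h1 : 0 ≤ 1 - s / δ := by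
        rw [sub_nonneg, div_le_one hδ]
        exact h
      have h0q : 0 ≤ s / δ := by positivity
      have e1 : (1 - s / δ) * (1 - s / δ) ≤ 1 := by nlinarith
      rw [hgs, Real.norm_eq_abs, abs_of_nonneg (by positivity)]
      calc (1 - s / δ) * (s * (1 - s / δ)) = s * ((1 - s / δ) * (1 - s / δ)) := by ring
        _ ≤ s * 1 := by nlinarith
        _ ≤ δ := by linarith
    · have hgs : g s = 1 := min_eq_left (by rw [le_div_iff₀ hδ]; linarith)
      rw [hgs]
      simpa using hδ.le
  have hz : y - y * u = y * (1 - u) := by rw [mul_sub, mul_one]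
  have hstar : star (y * (1 - u)) = (1 - u) * star y := by
    rw [star_mul, show star ((1:E →L[ℂ] E) - u) = 1 - u by rw [star_sub, star_one, hu_sa.star_eq]]
  have hmid : (1 - u) * star y * (y * (1 - u)) = (1 - u) * t * (1 - u) := by
    rw [ht_def]
    noncomm_ring
  have hcsq : ‖y * (1 - u)‖ * ‖y * (1 - u)‖ = ‖(1 - u) * t * (1 - u)‖ := by
    rw [← CStarRing.norm_star_mul_self (x := y * (1 - u)), hstar, hmid]
  have hnorm : ‖y - y * u‖ * ‖y - y * u‖ ≤ δ := by rw [hz, hcsq]; exact hbound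
  rw [dist_eq_norm]
  nlinarith [norm_nonneg (y - y * u)]

lemma aux_mult_left (A J : NonUnitalStarSubalgebra ℂ (E →L[ℂ] E))
    (hJA : (J : Set (E →L[ℂ] E)) ⊆ (A : Set (E →L[ℂ] E)))
    (hJclosed : IsClosed (J : Set (E →L[ℂ] E)))
    (hJideal : ∀ a ∈ A, ∀ x ∈ J, a * x ∈ J ∧ x * a ∈ J)
    (m : E →L[ℂ] E) (hm : ∀ a ∈ A, m * a ∈ A ∧ a * m ∈ A)
    (hms : ∀ a ∈ A, star m * a ∈ A ∧ a * star m ∈ A)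
    (x : E →L[ℂ] E) (hx : x ∈ J) : m * x ∈ J := by
  have hxA : x ∈ A := hJA hx
  have hnxA : m * x ∈ A := (hm x hxA).1
  apply aux_abs A J hJclosed hJideal _ hnxA
  rw [star_mul, mul_assoc]
  exact (hJideal (star m * (m * x)) (hms _ hnxA).1 (star x) (star_mem hx)).2

lemma aux_mult_right (A J : NonUnitalStarSubalgebra ℂ (E →L[ℂ] E))
    (hJA : (J : Set (E →L[ℂ] E)) ⊆ (A : Set (E →L[ℂ] E)))
    (hJclosed : IsClosed (J : Set (E →L[ℂ] E)))
    (hJideal : ∀ a ∈ A, ∀ x ∈ J, a * x ∈ J ∧ x * a ∈ J)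
    (m : E →L[ℂ] E) (hm : ∀ a ∈ A, m * a ∈ A ∧ a * m ∈ A)
    (hms : ∀ a ∈ A, star m * a ∈ A ∧ a * star m ∈ A)
    (x : E →L[ℂ] E) (hx : x ∈ J) : x * m ∈ J := by
  have h1 : star m * star x ∈ J :=
    aux_mult_left A J hJA hJclosed hJideal (star m) hms
      (by simpa only [star_star] using hm) (star x) (star_mem hx)
  have h2 : x * m = star (star m * star x) := by rw [star_mul, star_star, star_star]
  rw [h2]
  exact star_mem h1

lemma aux_cfc_mult (A : NonUnitalStarSubalgebra ℂ (E →L[ℂ] E))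
    (hAclosed : IsClosed (A : Set (E →L[ℂ] E)))
    (x : E →L[ℂ] E) (hx : IsSelfAdjoint x)
    (hxmul : ∀ a ∈ A, x * a ∈ A ∧ a * x ∈ A)
    (f : ℝ → ℝ) (hf : Continuous f) :
    ∀ a ∈ A, cfc f x * a ∈ A ∧ a * cfc f x ∈ A := by
  set M : Set (E →L[ℂ] E) := {m | ∀ a ∈ A, m * a ∈ A ∧ a * m ∈ A} with hM
  have hsmulA : ∀ (r : ℝ), ∀ b ∈ A, r • b ∈ A := fun r b hb => by
    rw [← algebraMap_smul ℂ r b]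
    exact A.smul_mem _ hb
  have hMclosed : IsClosed M := by
    have hrep : M = ⋂ a ∈ (A : Set (E →L[ℂ] E)), ((· * a) ⁻¹' A ∩ (a * ·) ⁻¹' A) := by
      ext m
      simp only [hM, Set.mem_setOf_eq, Set.mem_iInter, Set.mem_inter_iff, Set.mem_preimage,
        SetLike.mem_coe]
    rw [hrep]
    exact isClosed_biInter fun a _ =>
      (hAclosed.preimage (continuous_mul_right a)).inter
        (hAclosed.preimage (continuous_mul_left a))
  have hM0 : (0 : E →L[ℂ] E) ∈ M := fun a ha => by
    simp only [zero_mul, mul_zero]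
    exact ⟨zero_mem A, zero_mem A⟩
  have hM1 : (1 : E →L[ℂ] E) ∈ M := fun a ha => by
    simp only [one_mul, mul_one]
    exact ⟨ha, ha⟩
  have hMadd : ∀ m ∈ M, ∀ n ∈ M, m + n ∈ M := fun m hm n hn a ha => by
    rw [add_mul, mul_add]
    exact ⟨add_mem (hm a ha).1 (hn a ha).1, add_mem (hm a ha).2 (hn a ha).2⟩
  have hMmul : ∀ m ∈ M, ∀ n ∈ M, m * n ∈ M := fun m hm n hn a ha => by
    rw [mul_assoc, ← mul_assoc a m n]
    exact ⟨(hm _ (hn a ha).1).1, (hn _ (hm a ha).2).2⟩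
  have hMsmul : ∀ (r : ℝ), ∀ m ∈ M, r • m ∈ M := fun r m hm a ha => by
    rw [smul_mul_assoc, mul_smul_comm]
    exact ⟨hsmulA r _ (hm a ha).1, hsmulA r _ (hm a ha).2⟩
  have key : cfcₙ (fun s => f s - f 0) x ∈ M :=
    aux_cfcn_mem x hx M hMclosed hM0 hxmul hMadd hMmul hMsmul _
      (hf.sub continuous_const) (by simp)
  have hdec : cfc f x = cfcₙ (fun s => f s - f 0) x + f 0 • 1 := by
    rw [cfcₙ_eq_cfc (f := fun s => f s - f 0) ((hf.sub continuous_const).continuousOn) (by simp),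
      cfc_sub f (fun _ => f 0) x (hf.continuousOn) (continuous_const.continuousOn),
      cfc_const (f 0) x hx, Algebra.algebraMap_eq_smul_one, sub_add_cancel]
  rw [hdec]
  exact hMadd _ key _ (hMsmul (f 0) 1 hM1)

lemma aux_diff (A J : NonUnitalStarSubalgebra ℂ (E →L[ℂ] E))
    (hJA : (J : Set (E →L[ℂ] E)) ⊆ (A : Set (E →L[ℂ] E)))
    (hJclosed : IsClosed (J : Set (E →L[ℂ] E)))
    (hJideal : ∀ a ∈ A, ∀ x ∈ J, a * x ∈ J ∧ x * a ∈ J)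
    (S T : E →L[ℂ] E) (hS : IsSelfAdjoint S) (hT : IsSelfAdjoint T)
    (hSmulA : ∀ a ∈ A, S * a ∈ A ∧ a * S ∈ A)
    (hTmulA : ∀ a ∈ A, T * a ∈ A ∧ a * T ∈ A)
    (hST : S - T ∈ J)
    (g : ℝ → ℝ) (hg : Continuous g) :
    cfc g S - cfc g T ∈ J := by
  -- multiplier property of powers of T
  have hTpow : ∀ k : ℕ, ∀ a ∈ A, T ^ k * a ∈ A ∧ a * T ^ k ∈ A := by
    intro k
    induction k with
    | zero => intro a ha; rw [pow_zero, one_mul, mul_one]; exact ⟨ha, ha⟩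
    | succ k ih =>
        intro a ha
        rw [pow_succ, mul_assoc, ← mul_assoc a]
        exact ⟨(ih _ (hTmulA a ha).1).1, (hTmulA _ (ih a ha).2).2⟩
  -- powers difference in J
  have hpow : ∀ k : ℕ, S ^ k - T ^ k ∈ J := by
    intro k
    induction k with
    | zero => simpa using zero_mem J
    | succ k ih =>
        have h1 : S ^ (k+1) - T ^ (k+1) = S * (S ^ k - T ^ k) + (S - T) * T ^ k := by
          rw [pow_succ' S, pow_succ' T, mul_sub, sub_mul]
          abel
        rw [h1]
        refine add_mem ?_ ?_
        · exact aux_mult_left A J hJA hJclosed hJideal S hSmulA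
            (by simpa only [hS.star_eq] using hSmulA) _ ih
        · exact aux_mult_right A J hJA hJclosed hJideal (T ^ k) (hTpow k)
            (by simpa only [(hT.pow k).star_eq] using hTpow k) _ hST
  -- polynomial differences in J
  have hpoly : ∀ p : Polynomial ℝ,
      Polynomial.aeval S p - Polynomial.aeval T p ∈ J := by
    intro p
    rw [Polynomial.aeval_eq_sum_range (p := p) (x := S),
      Polynomial.aeval_eq_sum_range (p := p) (x := T), ← Finset.sum_sub_distrib]
    refine sum_mem fun i _ => ?_
    rw [← smul_sub, ← algebraMap_smul ℂ (p.coeff i)]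
    exact J.smul_mem _ (hpow i)
  -- spectra bounds
  set R : ℝ := max (‖S‖ * ‖(1 : E →L[ℂ] E)‖) (‖T‖ * ‖(1 : E →L[ℂ] E)‖) with hR
  have hσS : ∀ s ∈ spectrum ℝ S, s ∈ Set.Icc (-R) R := by
    intro s hs
    have h1 : ‖s‖ ≤ ‖S‖ * ‖(1 : E →L[ℂ] E)‖ := spectrum.norm_le_norm_mul_of_mem hs
    rw [Real.norm_eq_abs] at h1
    have := abs_le.mp (h1.trans (le_max_left (‖S‖ * ‖(1 : E →L[ℂ] E)‖) (‖T‖ * ‖(1 : E →L[ℂ] E)‖)))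
    exact ⟨this.1, this.2⟩
  have hσT : ∀ s ∈ spectrum ℝ T, s ∈ Set.Icc (-R) R := by
    intro s hs
    have h1 : ‖s‖ ≤ ‖T‖ * ‖(1 : E →L[ℂ] E)‖ := spectrum.norm_le_norm_mul_of_mem hs
    rw [Real.norm_eq_abs] at h1
    have := abs_le.mp (h1.trans (le_max_right (‖S‖ * ‖(1 : E →L[ℂ] E)‖) (‖T‖ * ‖(1 : E →L[ℂ] E)‖)))
    exact ⟨this.1, this.2⟩
  -- approximation
  suffices h : cfc g S - cfc g T ∈ closure (J : Set (E →L[ℂ] E)) by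
    rwa [hJclosed.closure_eq] at h
  apply Metric.mem_closure_iff.mpr
  intro ε hε
  obtain ⟨p, hp⟩ := exists_polynomial_near_of_continuousOn (-R) R g hg.continuousOn
    (ε / 3) (by positivity)
  refine ⟨Polynomial.aeval S p - Polynomial.aeval T p, hpoly p, ?_⟩
  have e1 : cfc g S - Polynomial.aeval S p = cfc (fun s => g s - p.eval s) S := by
    rw [cfc_sub g p.eval S hg.continuousOn
      (Polynomial.continuous p).continuousOn, cfc_polynomial p S hS]
  have e2 : cfc g T - Polynomial.aeval T p = cfc (fun s => g s - p.eval s) T := by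
    rw [cfc_sub g p.eval T hg.continuousOn
      (Polynomial.continuous p).continuousOn, cfc_polynomial p T hT]
  have n1 : ‖cfc (fun s => g s - p.eval s) S‖ ≤ ε / 3 := by
    refine norm_cfc_le (by positivity) fun s hs => ?_
    rw [Real.norm_eq_abs, abs_sub_comm]
    exact (hp s (hσS s hs)).le
  have n2 : ‖cfc (fun s => g s - p.eval s) T‖ ≤ ε / 3 := by
    refine norm_cfc_le (by positivity) fun s hs => ?_
    rw [Real.norm_eq_abs, abs_sub_comm]
    exact (hp s (hσT s hs)).le
  rw [dist_eq_norm]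
  have e3 : cfc g S - cfc g T - (Polynomial.aeval S p - Polynomial.aeval T p)
      = (cfc g S - Polynomial.aeval S p) - (cfc g T - Polynomial.aeval T p) := by abel
  rw [e3, e1, e2]
  calc ‖_ - _‖ ≤ ‖cfc (fun s => g s - p.eval s) S‖ + ‖cfc (fun s => g s - p.eval s) T‖ :=
        norm_sub_le _ _
    _ ≤ ε / 3 + ε / 3 := add_le_add n1 n2
    _ < ε := by linarith

end AuxLemmas

/-- `T` is a multiplier of the set `A` of bounded operators. -/
def IsMultiplierOf {E : Type*} [NormedAddCommGroup E] [InnerProductSpace ℂ E] [CompleteSpace E]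
    (A : Set (E →L[ℂ] E)) (T : E →L[ℂ] E) : Prop :=
  ∀ a ∈ A, T * a ∈ A ∧ a * T ∈ A

/-- Let `A ⊆ B(E)` be a C*-algebra, `J` a closed (two-sided) ideal of `A`,
and `H` a self-adjoint multiplier of `A`.  Suppose there exists a positive self-adjoint
element `V ∈ J` such that `H² + V ≥ c·1` for some constant `c > 0`.  Then `H` is invertible
modulo `J`: for every continuous `f` compactly supported in `(-√c, √c)` one has `f(H) ∈ J`. -/
theorem stmt11 {E : Type*} [NormedAddCommGroup E] [InnerProductSpace ℂ E] [CompleteSpace E]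
    (A : NonUnitalStarSubalgebra ℂ (E →L[ℂ] E))
    (hAclosed : IsClosed (A : Set (E →L[ℂ] E)))
    (J : NonUnitalStarSubalgebra ℂ (E →L[ℂ] E))
    (hJA : (J : Set (E →L[ℂ] E)) ⊆ (A : Set (E →L[ℂ] E)))
    (hJclosed : IsClosed (J : Set (E →L[ℂ] E)))
    (hJideal : ∀ a ∈ A, ∀ x ∈ J, a * x ∈ J ∧ x * a ∈ J)
    (H : E →L[ℂ] E) (hH : IsSelfAdjoint H)
    (hHmul : IsMultiplierOf (A : Set (E →L[ℂ] E)) H)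
    (V : E →L[ℂ] E) (hVJ : V ∈ J) (hVpos : (0 : E →L[ℂ] E) ≤ V)
    (c : ℝ) (hc : 0 < c)
    (hbound : (c : ℂ) • (1 : E →L[ℂ] E) ≤ H ^ 2 + V) :
    ∀ f : ℝ → ℝ, Continuous f →
      tsupport f ⊆ Set.Ioo (-Real.sqrt c) (Real.sqrt c) → cfc f H ∈ J := by
  intro f hf hsupp
  classical
  -- trivial case : f vanishes identically
  by_cases hne : tsupport f = ∅
  · have hf0 : f = fun _ => (0 : ℝ) := by
      funext t
      exact image_eq_zero_of_notMem_tsupport (by simp [hne])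
    rw [hf0, show (fun _ : ℝ => (0:ℝ)) = (0 : ℝ → ℝ) from rfl, cfc_zero ℝ H]
    exact zero_mem J
  -- setup
  set S : E →L[ℂ] E := H ^ 2 with hS_def
  set T : E →L[ℂ] E := H ^ 2 + V with hT_def
  have hV_sa : IsSelfAdjoint V := .of_nonneg hVpos
  have hS_sa : IsSelfAdjoint S := hH.pow 2
  have hT_sa : IsSelfAdjoint T := hS_sa.add hV_sa
  have hVA : V ∈ A := hJA hVJ
  have hSmulA : ∀ a ∈ A, S * a ∈ A ∧ a * S ∈ A := by
    intro a ha
    have h2 : S = H * H := sq H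
    rw [h2, mul_assoc, ← mul_assoc a]
    exact ⟨(hHmul _ (hHmul a ha).1).1, (hHmul _ (hHmul a ha).2).2⟩
  have hTmulA : ∀ a ∈ A, T * a ∈ A ∧ a * T ∈ A := by
    intro a ha
    rw [hT_def, add_mul, mul_add]
    exact ⟨add_mem (hSmulA a ha).1 (mul_mem hVA ha),
      add_mem (hSmulA a ha).2 (mul_mem ha hVA)⟩
  have hST : S - T ∈ J := by
    have : S - T = -V := by rw [hT_def]; abel
    rw [this]
    exact neg_mem hVJ
  -- the maximum of t² on the support of f
  have hKc : IsCompact (tsupport f) :=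
    Metric.isCompact_of_isClosed_isBounded (isClosed_tsupport f)
      ((Metric.isBounded_Ioo _ _).subset hsupp)
  obtain ⟨t₀, ht₀K, ht₀max⟩ := hKc.exists_isMaxOn (Set.nonempty_iff_ne_empty.mpr hne)
    ((continuous_pow 2).continuousOn : ContinuousOn (fun t : ℝ => t ^ 2) _)
  set b : ℝ := t₀ ^ 2 with hb_def
  have hbc : b < c := by
    obtain ⟨h1, h2⟩ := hsupp ht₀K
    have := sq_lt_sq' h1 h2
    rwa [Real.sq_sqrt hc.le] at this
  have hbnn : 0 ≤ b := sq_nonneg t₀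
  -- the cutoff function
  set g : ℝ → ℝ := fun s => max 0 (min 1 ((c - s) / (c - b))) with hg_def
  have hcb : 0 < c - b := by linarith
  have hgc : Continuous g :=
    continuous_const.max (continuous_const.min
      ((continuous_const.sub continuous_id).div_const _))
  have hg1 : ∀ s : ℝ, s ≤ b → g s = 1 := by
    intro s hs
    have h1 : (1 : ℝ) ≤ (c - s) / (c - b) := by
      rw [le_div_iff₀ hcb]
      linarith
    simp only [hg_def]
    rw [min_eq_left h1, max_eq_right zero_le_one]
  have hg0' : ∀ s : ℝ, c ≤ s → g s = 0 := by
    intro s hs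
    have h1 : (c - s) / (c - b) ≤ 0 := div_nonpos_of_nonpos_of_nonneg (by linarith) hcb.le
    simp only [hg_def]
    rw [min_eq_right (h1.trans zero_le_one), max_eq_left h1]
  -- g kills T
  have hσT : ∀ s ∈ spectrum ℝ T, c ≤ s := by
    have hbd : algebraMap ℝ (E →L[ℂ] E) c ≤ T := by
      have e : algebraMap ℝ (E →L[ℂ] E) c = (c : ℂ) • (1 : E →L[ℂ] E) := by
        rw [Algebra.algebraMap_eq_smul_one, ← algebraMap_smul ℂ c (1 : E →L[ℂ] E)]
        norm_num
      rw [e, hT_def]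
      exact hbound
    exact (algebraMap_le_iff_le_spectrum hT_sa).mp hbd
  have hgT : cfc g T = 0 := by
    have : (spectrum ℝ T).EqOn g 0 := fun s hs => hg0' s (hσT s hs)
    rw [cfc_congr this, cfc_zero ℝ T]
  -- difference in J
  have hdiff : cfc g S - cfc g T ∈ J :=
    aux_diff A J hJA hJclosed hJideal S T hS_sa hT_sa hSmulA hTmulA hST g hgc
  -- the key identity : cfc f H = cfc f H * (cfc g S - cfc g T)
  have hfg : (fun t : ℝ => f t * g (t ^ 2)) = f := by
    funext t
    by_cases ht : t ∈ tsupport f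
    · have : t ^ 2 ≤ b := ht₀max ht
      rw [hg1 _ this, mul_one]
    · rw [image_eq_zero_of_notMem_tsupport ht, zero_mul]
  have hkey : cfc f H = cfc f H * (cfc g S - cfc g T) := by
    rw [hgT, sub_zero, hS_def, ← cfc_pow_id (R := ℝ) H 2 hH,
      ← cfc_comp g (fun t : ℝ => t ^ 2) H hH hgc.continuousOn (continuous_pow 2).continuousOn,
      Function.comp_def,
      ← cfc_mul f (fun t => g (t ^ 2)) H hf.continuousOn
        (hgc.comp (continuous_pow 2)).continuousOn]
    exact (cfc_congr fun t _ => congrFun hfg t).symm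
  -- conclude
  have hw := aux_cfc_mult A hAclosed H hH (fun a ha => hHmul a ha) f hf
  have hw_sa : IsSelfAdjoint (cfc f H) := cfc_predicate (R := ℝ) f H
  rw [hkey]
  exact aux_mult_left A J hJA hJclosed hJideal (cfc f H) hw
    (by simpa only [hw_sa.star_eq] using hw) _ hdiff
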